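/- Let n > 2r and n/r = n'/r' (as rationals). Then there is a graph homomorphism from the Kneser graph K_{n:r} to K_{n':r'} if and only if n divides n' (equivalently, r divides r' with the same quotient). -/

import Mathlib

open Finset

lemma nat_downclosed (S : Finset ℕ) (h : ∀ i, i + 1 ∈ S → i ∈ S) : S = range S.card := by
  have down : ∀ d, ∀ a ∈ S, a - d ∈ S := by
    intro d
    induction d with
    | zero => simpa using fun a ha => ha
    | succ d ih =>
      intro a ha
      have hd := ih a ha
      rcases Nat.eq_zero_or_pos (a - d) with h0 | hpos
      · have he : a - (d+1) = a - d := by omega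
        rw [he]; exact hd
      · have he : (a - (d+1)) + 1 = a - d := by omega
        exact h _ (by rw [he]; exact hd)
  have mem_iff : ∀ m, m ∈ S ↔ m < S.card := by
    intro m
    constructor
    · intro hm
      have hsub : range (m+1) ⊆ S := by
        intro i hi
        rw [mem_range] at hi
        have := down (m - i) m hm
        have he : m - (m - i) = i := by omega
        rwa [he] at this
      have := card_le_card hsub
      simpa using this
    · intro hm
      by_contra hns
      have hsub : S ⊆ range m := by
        intro a ha
        rw [mem_range]
        by_contra hge
        have := down (a - m) a ha
        have he : a - (a - m) = m := by omega
        rw [he] at this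
        exact hns this
      have := card_le_card hsub
      simp at this; omega
  ext i; rw [mem_range, mem_iff]


lemma image_eq_iff_mem_iff {α β : Type*} [DecidableEq β] (σ : α ≃ β) (A : Finset α)
    (B : Finset β) (hAB : A.card = B.card) :
    Finset.image σ A = B ↔ ∀ x, x ∈ A ↔ σ x ∈ B := by
  constructor
  · intro h x
    constructor
    · intro hx; rw [← h]; exact mem_image_of_mem _ hx
    · intro hx
      rw [← h] at hx
      obtain ⟨a, ha, he⟩ := mem_image.1 hx
      rwa [← σ.injective he]
  · intro h
    apply eq_of_subset_of_card_le
    · intro b hb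
      obtain ⟨a, ha, rfl⟩ := mem_image.1 hb
      exact (h a).1 ha
    · rw [card_image_of_injective _ σ.injective, hAB]


lemma card_equiv_image {α β : Type*} [DecidableEq α] [DecidableEq β] [Fintype α] [Fintype β]
    (A : Finset α) (B : Finset β) (hAB : A.card = B.card)
    (hcard : Fintype.card α = Fintype.card β) :
    Fintype.card {σ : α ≃ β // Finset.image σ A = B}
      = (A.card).factorial * (Fintype.card α - A.card).factorial := by
  classical
  have memiff : ∀ (σh : {σ : α ≃ β // Finset.image σ A = B}) (x : α),
      x ∈ A ↔ σh.1 x ∈ B := fun σh => (image_eq_iff_mem_iff σh.1 A B hAB).1 σh.2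
  set Φ : {σ : α ≃ β // Finset.image σ A = B} →
      ({x // x ∈ A} ≃ {y // y ∈ B}) × ({x // x ∉ A} ≃ {y // y ∉ B}) :=
    fun σh => ⟨Equiv.subtypeEquiv σh.1 (fun a => memiff σh a),
               Equiv.subtypeEquiv σh.1 (fun a => not_congr (memiff σh a))⟩ with hΦ
  have hbij : Function.Bijective Φ := by
    constructor
    · rintro ⟨σ, hσ⟩ ⟨τ, hτ⟩ he
      rw [hΦ, Prod.mk.injEq] at he
      ext x
      by_cases hx : x ∈ A
      · have := congrArg (fun e : {x // x ∈ A} ≃ {y // y ∈ B} => (e ⟨x, hx⟩ : β)) he.1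
        simpa using this
      · have := congrArg (fun e : {x // x ∉ A} ≃ {y // y ∉ B} => (e ⟨x, hx⟩ : β)) he.2
        simpa using this
    · rintro ⟨e₀, e₁⟩
      set σ : α ≃ β :=
        (Equiv.sumCompl (· ∈ A)).symm.trans ((e₀.sumCongr e₁).trans (Equiv.sumCompl (· ∈ B)))
        with hσ
      have hev : ∀ (x : α) (hx : x ∈ A), σ x = (e₀ ⟨x, hx⟩ : β) := by
        intro x hx
        rw [hσ]
        simp [Equiv.sumCompl_symm_apply_of_pos hx]
      have hev' : ∀ (x : α) (hx : x ∉ A), σ x = (e₁ ⟨x, hx⟩ : β) := by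
        intro x hx
        rw [hσ]
        simp [Equiv.sumCompl_symm_apply_of_neg hx]
      have himg : Finset.image σ A = B := by
        rw [image_eq_iff_mem_iff σ A B hAB]
        intro x
        constructor
        · intro hx; rw [hev x hx]; exact (e₀ ⟨x, hx⟩).2
        · intro hx
          by_contra hxA
          rw [hev' x hxA] at hx
          exact (e₁ ⟨x, hxA⟩).2 hx
      refine ⟨⟨σ, himg⟩, ?_⟩
      rw [hΦ, Prod.mk.injEq]
      constructor
      · ext x
        simp [hev x.1 x.2]
      · ext x
        simp [hev' x.1 x.2]
  rw [Fintype.card_of_bijective hbij, Fintype.card_prod,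
    Fintype.card_equiv (Fintype.equivOfCardEq (by simp [Fintype.card_coe, hAB])),
    Fintype.card_equiv (Fintype.equivOfCardEq ?_), Fintype.card_coe,
    Fintype.card_subtype_compl, Fintype.card_coe]
  rw [Fintype.card_subtype_compl, Fintype.card_subtype_compl, Fintype.card_coe,
    Fintype.card_coe, hcard, hAB]


section
variable {n r : ℕ} [NeZero n]
set_option linter.unusedSectionVars false


lemma natCast_sub_natCast {a b : ℕ} (hba : b ≤ a) (han : a < n) :
    (((a : ZMod n) - (b : ZMod n))).val = a - b := by
  rw [← Nat.cast_sub hba, ZMod.val_cast_of_lt (by omega)]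

lemma val_cast_val (z : ZMod n) : ((z.val : ℕ) : ZMod n) = z := ZMod.natCast_rightInverse z

lemma val_sub_rev {t s : ZMod n} (h : s ≠ t) :
    (t - s).val = n - (s - t).val ∧ 0 < (s - t).val ∧ (s - t).val < n := by
  have h0 : s - t ≠ 0 := sub_ne_zero.2 h
  have hv : (s - t).val ≠ 0 := fun e => h0 (by
    have := congrArg (fun m : ℕ => (m : ZMod n)) e
    simpa [val_cast_val] using this)
  have : t - s = -(s - t) := by ring
  rw [this, ZMod.neg_val, if_neg h0]
  exact ⟨rfl, Nat.pos_of_ne_zero hv, ZMod.val_lt _⟩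

lemma diff_eq_cast_sub (t0 t s : ZMod n) :
    s - t = (((s - t0).val : ℕ) : ZMod n) - (((t - t0).val : ℕ) : ZMod n) := by
  rw [val_cast_val, val_cast_val]; ring


def arcIdx (t : ZMod n) (m : ℕ) : Finset (ZMod n) :=
  image (fun i : Fin m => t + (i : ℕ)) univ

lemma sub_self_add (t : ZMod n) (a : ℕ) : t + (a : ℕ) - t = ((a : ℕ) : ZMod n) := by ring_nf

lemma mem_arcIdx {t s : ZMod n} {m : ℕ} (hm : m ≤ n) :
    s ∈ arcIdx t m ↔ (s - t).val < m := by
  simp only [arcIdx, mem_image, mem_univ, true_and]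
  constructor
  · rintro ⟨i, rfl⟩
    rw [sub_self_add, ZMod.val_cast_of_lt (lt_of_lt_of_le i.2 hm)]
    exact i.2
  · intro h
    exact ⟨⟨(s - t).val, h⟩, by simp [ZMod.natCast_val, ZMod.cast_id]⟩

lemma card_arcIdx (t : ZMod n) {m : ℕ} (hm : m ≤ n) : (arcIdx t m).card = m := by
  rw [arcIdx, card_image_of_injective _ ?_, card_univ, Fintype.card_fin]
  intro i j hij
  have := congrArg (fun z : ZMod n => (z - t).val) hij
  simp only [sub_self_add] at this
  rw [ZMod.val_cast_of_lt (lt_of_lt_of_le i.2 hm),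
    ZMod.val_cast_of_lt (lt_of_lt_of_le j.2 hm)] at this
  exact Fin.ext this


-- intersection criterion
lemma arcIdx_inter {t s : ZMod n} {m : ℕ} (hm0 : 0 < m) (hm : 2 * m ≤ n) :
    (∃ z, z ∈ arcIdx t m ∧ z ∈ arcIdx s m) ↔ ((s - t).val < m ∨ (t - s).val < m) := by
  constructor
  · rintro ⟨z, hzt, hzs⟩
    rw [mem_arcIdx (by omega)] at hzt hzs
    set d := (z - t).val with hd
    set d' := (z - s).val with hd'
    have hst : s - t = ((d : ℕ) : ZMod n) - ((d' : ℕ) : ZMod n) := by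
      rw [hd, hd', ZMod.natCast_val, ZMod.natCast_val, ZMod.cast_id, ZMod.cast_id]; ring
    rcases le_total d' d with h | h
    · left; rw [hst, natCast_sub_natCast h (by omega)]; omega
    · right
      have : t - s = ((d' : ℕ) : ZMod n) - ((d : ℕ) : ZMod n) := by
        rw [hd, hd', ZMod.natCast_val, ZMod.natCast_val, ZMod.cast_id, ZMod.cast_id]; ring
      rw [this, natCast_sub_natCast h (by omega)]; omega
  · rintro (h | h)
    · exact ⟨s, (mem_arcIdx (by omega)).2 h, (mem_arcIdx (by omega)).2 (by simp [hm0])⟩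
    · exact ⟨t, (mem_arcIdx (by omega)).2 (by simp [hm0]), (mem_arcIdx (by omega)).2 h⟩

lemma arcIdx_cast_eq_sdiff {a m : ℕ} (hm0 : 0 < m) (ham : a + m ≤ n) :
    arcIdx ((a : ℕ) : ZMod n) m = arcIdx (0 : ZMod n) (a + m) \ arcIdx (0 : ZMod n) a := by
  ext z
  rw [mem_sdiff, mem_arcIdx (by omega), mem_arcIdx (by omega), mem_arcIdx (by omega),
    sub_zero]
  set v := z.val with hv
  have hvn : v < n := ZMod.val_lt z
  rcases Nat.lt_or_ge v a with hlt | hge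
  · have hza : ((a : ℕ) : ZMod n) ≠ z := by
      intro he
      rw [← he, ZMod.val_cast_of_lt (by omega)] at hv
      omega
    have h1 : (((a : ℕ) : ZMod n) - z).val = a - v := by
      rw [← val_cast_val z, ← hv, natCast_sub_natCast (by omega) (by omega)]
    have h2 := val_sub_rev hza
    constructor
    · intro h; omega
    · intro h; omega
  · have h1 : (z - ((a : ℕ) : ZMod n)).val = v - a := by
      rw [← val_cast_val z, ← hv, natCast_sub_natCast (by omega) (by omega)]
    rw [h1]
    omega

def zEquiv : ZMod n ≃ Fin n where
  toFun z := ⟨z.val, ZMod.val_lt z⟩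
  invFun f := ((f : ℕ) : ZMod n)
  left_inv z := val_cast_val z
  right_inv f := by ext; simp [ZMod.val_cast_of_lt f.2]

lemma fin_downclosed (D : Finset (Fin n)) (h : ∀ p ∈ D, ∀ q, q ≤ p → q ∈ D) :
    ∀ p : Fin n, p ∈ D ↔ p.val < D.card := by
  have cardle : ∀ p : Fin n, (univ.filter (fun q : Fin n => q ≤ p)).card = p.val + 1 := by
    intro p
    have : image Fin.val (univ.filter (fun q : Fin n => q ≤ p)) = range (p.val + 1) := by
      ext a
      simp only [mem_image, mem_filter, mem_univ, true_and, mem_range]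
      constructor
      · rintro ⟨q, hq, rfl⟩; exact Nat.lt_succ_of_le hq
      · intro ha
        exact ⟨⟨a, by omega⟩, by rw [Fin.le_def]; exact Nat.lt_succ_iff.1 ha, rfl⟩
    have := congrArg card this
    rwa [card_image_of_injective _ Fin.val_injective, card_range] at this
  have cardlt : ∀ p : Fin n, (univ.filter (fun q : Fin n => q < p)).card = p.val := by
    intro p
    have : image Fin.val (univ.filter (fun q : Fin n => q < p)) = range p.val := by
      ext a
      simp only [mem_image, mem_filter, mem_univ, true_and, mem_range]
      constructor
      · rintro ⟨q, hq, rfl⟩; exact hq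
      · intro ha
        exact ⟨⟨a, by omega⟩, by rw [Fin.lt_def]; exact ha, rfl⟩
    have := congrArg card this
    rwa [card_image_of_injective _ Fin.val_injective, card_range] at this
  intro p
  constructor
  · intro hp
    have hsub : univ.filter (fun q : Fin n => q ≤ p) ⊆ D := by
      intro q hq
      exact h p hp q (mem_filter.1 hq).2
    have := card_le_card hsub
    rw [cardle] at this
    omega
  · intro hp
    by_contra hnp
    have hsub : D ⊆ univ.filter (fun q : Fin n => q < p) := by
      intro q hq
      rw [mem_filter]
      refine ⟨mem_univ _, ?_⟩
      by_contra hqp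
      exact hnp (h q hq p (le_of_not_gt hqp))
    have := card_le_card hsub
    rw [cardlt] at this
    omega

lemma exists_sorted_equiv (key : Fin n → ℕ) :
    ∃ τ : ZMod n ≃ Fin n, ∀ (c : ℕ) (C : Finset (Fin n)),
      univ.filter (fun x => key x < c) = C → Finset.image τ (arcIdx 0 C.card) = C := by
  set π := Tuple.sort key with hπ
  refine ⟨zEquiv.trans π, ?_⟩
  intro c C hC
  set m := C.card with hm
  have hmn : m ≤ n := le_trans (card_le_univ C) (by simp)
  set D := univ.filter (fun p : Fin n => key (π p) < c) with hD
  have hDimg : image π D = C := by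
    ext y
    simp only [hD, mem_image, mem_filter, mem_univ, true_and, ← hC]
    constructor
    · rintro ⟨p, hp, rfl⟩; exact hp
    · intro hy
      exact ⟨π.symm y, by simpa using hy, by simp⟩
  have hDcard : D.card = m := by
    rw [← hDimg, card_image_of_injective _ π.injective] at hm
    omega
  have hDdown : ∀ p ∈ D, ∀ q, q ≤ p → q ∈ D := by
    intro p hp q hq
    rw [hD, mem_filter] at hp ⊢
    refine ⟨mem_univ _, lt_of_le_of_lt ?_ hp.2⟩
    exact Tuple.monotone_sort key hq
  have hDval : D = univ.filter (fun p : Fin n => p.val < m) := by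
    ext p
    have hiff := fin_downclosed D hDdown p
    rw [hDcard] at hiff
    simp only [mem_filter, mem_univ, true_and]
    exact hiff
  have hz : image zEquiv (arcIdx 0 m) = univ.filter (fun p : Fin n => p.val < m) := by
    ext p
    simp only [mem_image, mem_filter, mem_univ, true_and]
    constructor
    · rintro ⟨z, hz, rfl⟩
      rw [mem_arcIdx hmn, sub_zero] at hz
      exact hz
    · intro hp
      exact ⟨zEquiv.symm p, by
        rw [mem_arcIdx hmn, sub_zero]
        show (zEquiv.symm p : ZMod n).val < m
        simp [zEquiv, ZMod.val_cast_of_lt p.2]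
        exact hp, by simp⟩
  calc image (zEquiv.trans π) (arcIdx 0 m)
      = image π (image zEquiv (arcIdx 0 m)) := by rw [image_image]; rfl
    _ = image π D := by rw [hz, hDval]
    _ = C := hDimg

lemma close_card_le (hr : 0 < r) (hn : 2 * r < n) (T : Finset (ZMod n))
    (hT : ∀ t ∈ T, ∀ s ∈ T, (s - t).val < r ∨ (t - s).val < r) : T.card ≤ r := by
  rcases T.eq_empty_or_nonempty with rfl | ⟨t0, ht0⟩
  · simp
  set φ : ZMod n → ℕ := fun t => if (t - t0).val < r then (t - t0).val else (t - t0).val + r - n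
    with hφ
  have key : ∀ t ∈ T, ¬((t - t0).val < r) → n - r < (t - t0).val ∧ (t - t0).val < n := by
    intro t ht hlt
    have hne : t ≠ t0 := by rintro rfl; simp at hlt; omega
    have h2 := (hT t0 ht0 t ht).resolve_left hlt
    have h3 := val_sub_rev (t := t0) (s := t) hne
    omega
  have hmap : ∀ t ∈ T, φ t ∈ range r := by
    intro t ht
    rw [mem_range, hφ]
    by_cases hc : (t - t0).val < r
    · simpa [hc] using hc
    · have := key t ht hc
      simp only [if_neg hc]
      omega
  have mixed : ∀ t ∈ T, ∀ s ∈ T, (t - t0).val < r → ¬((s - t0).val < r) →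
      (t - t0).val = (s - t0).val + r - n → False := by
    intro t ht s hs h1 h2 he
    have hk := key s hs h2
    set a := (t - t0).val
    set b := (s - t0).val
    have hab : a ≤ b := by omega
    have hst : (s - t).val = b - a := by
      rw [diff_eq_cast_sub t0, natCast_sub_natCast hab (by omega)]
    have hne : s ≠ t := by
      intro hst'; rw [hst'] at hst; simp at hst; omega
    have hrev := val_sub_rev hne
    have := hT t ht s hs
    omega
  have hinj : Set.InjOn φ (T : Set (ZMod n)) := by
    intro t ht s hs he
    simp only [hφ] at he
    have hval : (t - t0).val = (s - t0).val → t = s := by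
      intro hab
      have h' := ZMod.val_injective n hab
      exact sub_left_inj.1 h'
    by_cases h1 : (t - t0).val < r <;> by_cases h2 : (s - t0).val < r
    · rw [if_pos h1, if_pos h2] at he; exact hval he
    · rw [if_pos h1, if_neg h2] at he
      exact absurd (mixed t ht s hs h1 h2 (by omega)) (by simp)
    · rw [if_neg h1, if_pos h2] at he
      exact absurd (mixed s hs t ht h2 h1 (by omega)) (by simp)
    · rw [if_neg h1, if_neg h2] at he
      have k1 := key t ht h1; have k2 := key s hs h2
      exact hval (by omega)
  calc T.card ≤ (range r).card := card_le_card_of_injOn φ hmap hinj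
    _ = r := card_range r


lemma close_card_eq (hr : 0 < r) (hn : 2 * r < n) (T : Finset (ZMod n))
    (hT : ∀ t ∈ T, ∀ s ∈ T, (s - t).val < r ∨ (t - s).val < r) (hcard : T.card = r) :
    ∃ p : ZMod n, T = univ.filter (fun s => (p - s).val < r) := by
  have hne : T.Nonempty := by rw [← card_pos, hcard]; exact hr
  obtain ⟨t0, ht0⟩ := hne
  set φ : ZMod n → ℕ := fun t => if (t - t0).val < r then (t - t0).val else (t - t0).val + r - n
    with hφ
  have key : ∀ t ∈ T, ¬((t - t0).val < r) → n - r < (t - t0).val ∧ (t - t0).val < n := by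
    intro t ht hlt
    have hne : t ≠ t0 := by rintro rfl; simp at hlt; omega
    have h2 := (hT t0 ht0 t ht).resolve_left hlt
    have h3 := val_sub_rev (t := t0) (s := t) hne
    omega
  have hmap : ∀ t ∈ T, φ t ∈ range r := by
    intro t ht
    rw [mem_range, hφ]
    by_cases hc : (t - t0).val < r
    · simpa [hc] using hc
    · have := key t ht hc
      simp only [if_neg hc]
      omega
  have mixed : ∀ t ∈ T, ∀ s ∈ T, (t - t0).val < r → ¬((s - t0).val < r) →
      (t - t0).val = (s - t0).val + r - n → False := by
    intro t ht s hs h1 h2 he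
    have hk := key s hs h2
    set a := (t - t0).val
    set b := (s - t0).val
    have hab : a ≤ b := by omega
    have hst : (s - t).val = b - a := by
      rw [diff_eq_cast_sub t0, natCast_sub_natCast hab (by omega)]
    have hne : s ≠ t := by
      intro hst'; rw [hst'] at hst; simp at hst; omega
    have hrev := val_sub_rev hne
    have := hT t ht s hs
    omega
  have hinj : Set.InjOn φ (T : Set (ZMod n)) := by
    intro t ht s hs he
    simp only [hφ] at he
    have hval : (t - t0).val = (s - t0).val → t = s := by
      intro hab
      have h' := ZMod.val_injective n hab
      exact sub_left_inj.1 h'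
    by_cases h1 : (t - t0).val < r <;> by_cases h2 : (s - t0).val < r
    · rw [if_pos h1, if_pos h2] at he; exact hval he
    · rw [if_pos h1, if_neg h2] at he
      exact absurd (mixed t ht s hs h1 h2 (by omega)) (by simp)
    · rw [if_neg h1, if_pos h2] at he
      exact absurd (mixed s hs t ht h2 h1 (by omega)) (by simp)
    · rw [if_neg h1, if_neg h2] at he
      have k1 := key t ht h1; have k2 := key s hs h2
      exact hval (by omega)
  have himg : T.image φ = range r := by
    apply eq_of_subset_of_card_le
    · intro i hi
      obtain ⟨t, ht, rfl⟩ := mem_image.1 hi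
      exact hmap t ht
    · rw [card_image_of_injOn hinj, hcard, card_range]
  set B1 : Finset (ZMod n) := T.filter (fun t => (t - t0).val < r) with hB1
  set V1 : Finset ℕ := B1.image (fun t => (t - t0).val) with hV1
  have hV1sub : V1 ⊆ range r := by
    intro i hi
    obtain ⟨t, ht, rfl⟩ := mem_image.1 hi
    exact mem_range.2 (mem_filter.1 ht).2
  have hV1down : ∀ i, i + 1 ∈ V1 → i ∈ V1 := by
    intro i hi
    obtain ⟨s, hsB, hsv⟩ := mem_image.1 hi
    obtain ⟨hsT, hslt⟩ := mem_filter.1 hsB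
    have hir : i ∈ range r := by rw [mem_range]; omega
    rw [← himg] at hir
    obtain ⟨t, htT, htφ⟩ := mem_image.1 hir
    have htφ' : (if (t - t0).val < r then (t - t0).val else (t - t0).val + r - n) = i := htφ
    by_cases hb : (t - t0).val < r
    · refine mem_image.2 ⟨t, mem_filter.2 ⟨htT, hb⟩, ?_⟩
      rwa [if_pos hb] at htφ'
    · exfalso
      have hk := key t htT hb
      rw [if_neg hb] at htφ'
      set a := (t - t0).val
      have ha : a = i + n - r := by omega
      have hts : (t - s).val = a - (i+1) := by
        rw [diff_eq_cast_sub t0, hsv, natCast_sub_natCast (by omega) (by omega)]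
      have htsne : t ≠ s := by
        intro h'; rw [h'] at hts; simp at hts; omega
      have hrev := val_sub_rev htsne
      have := hT s hsT t htT
      omega
  have hV1card : V1 = range V1.card := nat_downclosed V1 hV1down
  have hB1card : V1.card = B1.card := by
    rw [hV1]
    apply card_image_of_injOn
    intro t ht s hs he
    have h' := ZMod.val_injective n he
    exact sub_left_inj.1 h'
  have ht0B1 : t0 ∈ B1 := mem_filter.2 ⟨ht0, by simp; omega⟩
  have hV1pos : 0 < V1.card := by
    rw [hB1card]; exact card_pos.2 ⟨t0, ht0B1⟩
  set k : ℕ := V1.card - 1 with hk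
  have hkr : k < r := by
    have := card_le_card hV1sub
    rw [card_range] at this
    omega
  set p : ZMod n := t0 + ((k : ℕ) : ZMod n) with hp
  have hTP : T ⊆ univ.filter (fun s => (p - s).val < r) := by
    intro t ht
    rw [mem_filter]
    refine ⟨mem_univ _, ?_⟩
    by_cases hb : (t - t0).val < r
    · set i := (t - t0).val with hi
      have hiV1 : i ∈ V1 := mem_image.2 ⟨t, mem_filter.2 ⟨ht, hb⟩, rfl⟩
      have hik : i ≤ k := by
        rw [hV1card, mem_range] at hiV1; omega
      have hpt : p - t = ((k : ℕ) : ZMod n) - ((i : ℕ) : ZMod n) := by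
        rw [hp, hi, val_cast_val]; ring
      rw [hpt, natCast_sub_natCast hik (by omega)]
      omega
    · have hkey := key t ht hb
      set a := (t - t0).val with ha
      set i := a + r - n with hi
      have hiφ : φ t = i := by rw [hφ]; exact if_neg hb
      have hinV1 : i ∉ V1 := by
        intro hiV1
        obtain ⟨s, hsB, hsv⟩ := mem_image.1 hiV1
        obtain ⟨hsT, hslt⟩ := mem_filter.1 hsB
        have hsφ : φ s = i := by rw [hφ]; simp only [if_pos hslt]; exact hsv
        have : s = t := hinj hsT ht (by rw [hsφ, hiφ])
        rw [this] at hslt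
        exact hb hslt
      have hik : k + 1 ≤ i := by
        by_contra h'
        exact hinV1 (by rw [hV1card, mem_range]; omega)
      have htp : t - p = (((a - k : ℕ)) : ZMod n) := by
        have h1 : t - p = (t - t0) - ((k : ℕ) : ZMod n) := by rw [hp]; ring
        have h2 : ((a : ℕ) : ZMod n) = t - t0 := by rw [ha]; exact val_cast_val _
        rw [h1, ← h2]
        exact (Nat.cast_sub (by omega)).symm
      have htpval : (t - p).val = a - k := by
        rw [htp, ZMod.val_cast_of_lt (by omega)]
      have htpne : t ≠ p := by
        intro h'; rw [h'] at htpval; simp at htpval; omega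
      have hrev := val_sub_rev htpne
      omega
  have hPcard : (univ.filter (fun s => (p - s).val < r)).card = r := by
    have himg2 : univ.filter (fun s => (p - s).val < r)
        = image (fun z => p - z) (univ.filter (fun z : ZMod n => z.val < r)) := by
      ext s
      simp only [mem_filter, mem_univ, true_and, mem_image]
      constructor
      · intro h
        exact ⟨p - s, h, by ring⟩
      · rintro ⟨z, hz, rfl⟩
        simpa using hz
    rw [himg2, card_image_of_injective _ (sub_right_injective)]
    have : univ.filter (fun z : ZMod n => z.val < r)
        = image (fun i : Fin r => ((i : ℕ) : ZMod n)) univ := by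
      ext z
      simp only [mem_filter, mem_univ, true_and, mem_image]
      constructor
      · intro h
        exact ⟨⟨z.val, h⟩, by simp [val_cast_val]⟩
      · rintro ⟨i, rfl⟩
        rw [ZMod.val_cast_of_lt (by omega)]
        exact i.2
    rw [this, card_image_of_injective _ ?_, card_univ, Fintype.card_fin]
    intro i j hij
    have := congrArg ZMod.val hij
    rw [ZMod.val_cast_of_lt (by omega), ZMod.val_cast_of_lt (by omega)] at this
    exact Fin.ext this
  exact ⟨p, eq_of_subset_of_card_le hTP (by rw [hPcard, hcard])⟩


def arcF (σ : ZMod n ≃ Fin n) (t : ZMod n) (r : ℕ) : Finset (Fin n) :=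
  image σ (arcIdx t r)

lemma card_arcF (σ : ZMod n ≃ Fin n) (t : ZMod n) (hrn : r ≤ n) : (arcF σ t r).card = r := by
  rw [arcF, card_image_of_injective _ σ.injective, card_arcIdx _ hrn]

lemma arcF_close {σ : ZMod n ≃ Fin n} {t s : ZMod n} (hr : 0 < r) (hrn : 2 * r ≤ n)
    (h : ¬ Disjoint (arcF σ t r) (arcF σ s r)) : (s - t).val < r ∨ (t - s).val < r := by
  rw [arcF, arcF, Finset.disjoint_image σ.injective, Finset.not_disjoint_iff] at h
  exact (arcIdx_inter hr hrn).1 (by tauto)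

lemma sum_arcs (hr : 0 < r) (hrn : r ≤ n) (F : Finset (Finset (Fin n)))
    (hF : ∀ S ∈ F, S.card = r) :
    ∑ σ : ZMod n ≃ Fin n, (univ.filter fun t : ZMod n => arcF σ t r ∈ F).card
      = n * (F.card * (r.factorial * (n - r).factorial)) := by
  classical
  have swap : ∑ σ : ZMod n ≃ Fin n, (univ.filter fun t : ZMod n => arcF σ t r ∈ F).card
      = ∑ t : ZMod n, (univ.filter fun σ : ZMod n ≃ Fin n => arcF σ t r ∈ F).card := by
    simp only [card_filter]
    exact Finset.sum_comm
  rw [swap]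
  have inner : ∀ t : ZMod n,
      (univ.filter fun σ : ZMod n ≃ Fin n => arcF σ t r ∈ F).card
        = F.card * (r.factorial * (n - r).factorial) := by
    intro t
    have hfib := card_eq_sum_card_fiberwise
      (f := fun σ : ZMod n ≃ Fin n => arcF σ t r)
      (s := univ.filter fun σ : ZMod n ≃ Fin n => arcF σ t r ∈ F) (t := F)
      (fun σ hσ => (mem_filter.1 hσ).2)
    rw [hfib]
    have heach : ∀ S ∈ F,
        ((univ.filter fun σ : ZMod n ≃ Fin n => arcF σ t r ∈ F).filter
          (fun σ => arcF σ t r = S)).card = r.factorial * (n - r).factorial := by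
      intro S hS
      have hsame : ((univ.filter fun σ : ZMod n ≃ Fin n => arcF σ t r ∈ F).filter
          (fun σ => arcF σ t r = S)) = univ.filter (fun σ => arcF σ t r = S) := by
        ext σ
        simp only [mem_filter, mem_univ, true_and]
        constructor
        · tauto
        · intro h; rw [h]; exact ⟨hS, rfl⟩
      rw [hsame]
      have := card_equiv_image (arcIdx t r) S (by rw [card_arcIdx _ hrn, hF S hS])
        (by rw [ZMod.card, Fintype.card_fin])
      rw [Fintype.card_subtype] at this
      rw [card_arcIdx _ hrn, ZMod.card] at this
      exact this
    rw [Finset.sum_congr rfl heach, Finset.sum_const, smul_eq_mul]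
  rw [Finset.sum_congr rfl (fun t _ => inner t), Finset.sum_const, smul_eq_mul, card_univ,
    ZMod.card]

lemma choose_identity (hr : 0 < r) (hrn : r ≤ n) :
    (n-1).choose (r-1) * (n * (r.factorial * (n - r).factorial)) = r * n.factorial := by
  obtain ⟨r0, rfl⟩ : ∃ r0, r = r0 + 1 := ⟨r - 1, by omega⟩
  obtain ⟨n0, rfl⟩ : ∃ n0, n = n0 + 1 := ⟨n - 1, by omega⟩
  simp only [Nat.add_sub_cancel]
  have hsub : n0 + 1 - (r0 + 1) = n0 - r0 := by omega
  rw [hsub, Nat.factorial_succ (r0), Nat.factorial_succ (n0)]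
  have hkey := Nat.choose_mul_factorial_mul_factorial (n := n0) (k := r0) (by omega)
  calc n0.choose r0 * ((n0 + 1) * ((r0 + 1) * r0.factorial * (n0 - r0).factorial))
      = (r0 + 1) * ((n0 + 1) * (n0.choose r0 * r0.factorial * (n0 - r0).factorial)) := by ring
    _ = (r0 + 1) * ((n0 + 1) * n0.factorial) := by rw [hkey]

lemma card_equivs : Fintype.card (ZMod n ≃ Fin n) = n.factorial := by
  rw [Fintype.card_equiv zEquiv, ZMod.card]

lemma ekr_bound (hr : 0 < r) (hn : 2 * r < n) (F : Finset (Finset (Fin n)))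
    (hF : ∀ S ∈ F, S.card = r) (hint : ∀ S ∈ F, ∀ T ∈ F, ¬ Disjoint S T) :
    F.card ≤ (n-1).choose (r-1) := by
  classical
  have hNle : ∀ σ : ZMod n ≃ Fin n,
      (univ.filter fun t : ZMod n => arcF σ t r ∈ F).card ≤ r := by
    intro σ
    apply close_card_le hr hn
    intro t ht s hs
    rw [mem_filter] at ht hs
    exact arcF_close hr (by omega) (hint _ ht.2 _ hs.2)
  have hsum := sum_arcs hr (by omega) F hF
  have hle : ∑ σ : ZMod n ≃ Fin n, (univ.filter fun t : ZMod n => arcF σ t r ∈ F).card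
      ≤ r * n.factorial := by
    calc ∑ σ : ZMod n ≃ Fin n, (univ.filter fun t : ZMod n => arcF σ t r ∈ F).card
        ≤ ∑ _σ : ZMod n ≃ Fin n, r := Finset.sum_le_sum (fun σ _ => hNle σ)
      _ = r * n.factorial := by rw [Finset.sum_const, smul_eq_mul, card_univ, card_equivs,
            mul_comm]
  rw [hsum] at hle
  rw [← choose_identity hr (by omega)] at hle
  have hpos : 0 < n * (r.factorial * (n - r).factorial) :=
    Nat.mul_pos (by omega) (Nat.mul_pos (Nat.factorial_pos _) (Nat.factorial_pos _))
  calc F.card = F.card * (n * (r.factorial * (n - r).factorial)) /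
        (n * (r.factorial * (n - r).factorial)) := by rw [Nat.mul_div_cancel _ hpos]
    _ ≤ (n-1).choose (r-1) := Nat.div_le_of_le_mul (by
        rw [mul_comm (n * (r.factorial * (n - r).factorial))]
        calc F.card * (n * (r.factorial * (n - r).factorial))
            = n * (F.card * (r.factorial * (n - r).factorial)) := by ring
          _ ≤ (n-1).choose (r-1) * (n * (r.factorial * (n - r).factorial)) := hle)

lemma ekr_all_arcs (hr : 0 < r) (hn : 2 * r < n) (F : Finset (Finset (Fin n)))
    (hF : ∀ S ∈ F, S.card = r) (hint : ∀ S ∈ F, ∀ T ∈ F, ¬ Disjoint S T)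
    (hcard : F.card = (n-1).choose (r-1)) (σ : ZMod n ≃ Fin n) :
    ∃ p : ZMod n, ∀ t, (arcF σ t r ∈ F ↔ (p - t).val < r) := by
  classical
  have hNle : ∀ σ : ZMod n ≃ Fin n,
      (univ.filter fun t : ZMod n => arcF σ t r ∈ F).card ≤ r := by
    intro σ
    apply close_card_le hr hn
    intro t ht s hs
    rw [mem_filter] at ht hs
    exact arcF_close hr (by omega) (hint _ ht.2 _ hs.2)
  have hsum := sum_arcs hr (by omega) F hF
  rw [hcard] at hsum
  have htot : ∑ σ : ZMod n ≃ Fin n, (univ.filter fun t : ZMod n => arcF σ t r ∈ F).card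
      = ∑ _σ : ZMod n ≃ Fin n, r := by
    rw [hsum, Finset.sum_const, smul_eq_mul, card_univ, card_equivs]
    have hci := choose_identity (n := n) (r := r) hr (by omega)
    calc n * ((n-1).choose (r-1) * (r.factorial * (n - r).factorial))
        = (n-1).choose (r-1) * (n * (r.factorial * (n - r).factorial)) := by ring
      _ = r * n.factorial := hci
      _ = n.factorial * r := by ring
  have hNeq : ∀ σ : ZMod n ≃ Fin n,
      (univ.filter fun t : ZMod n => arcF σ t r ∈ F).card = r := by
    by_contra hcon
    push_neg at hcon
    obtain ⟨σ0, hσ0⟩ := hcon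
    have hlt : (univ.filter fun t : ZMod n => arcF σ0 t r ∈ F).card < r :=
      lt_of_le_of_ne (hNle σ0) hσ0
    have := Finset.sum_lt_sum (s := (univ : Finset (ZMod n ≃ Fin n)))
      (f := fun σ => (univ.filter fun t : ZMod n => arcF σ t r ∈ F).card)
      (g := fun _ => r) (fun σ _ => hNle σ) ⟨σ0, mem_univ _, hlt⟩
    rw [htot] at this
    exact lt_irrefl _ this
  obtain ⟨p, hp⟩ := close_card_eq hr hn _ (by
      intro t ht s hs
      rw [mem_filter] at ht hs
      exact arcF_close hr (by omega) (hint _ ht.2 _ hs.2)) (hNeq σ)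
  refine ⟨p, fun t => ?_⟩
  constructor
  · intro ht
    have : t ∈ univ.filter fun t : ZMod n => arcF σ t r ∈ F := mem_filter.2 ⟨mem_univ _, ht⟩
    rw [hp, mem_filter] at this
    exact this.2
  · intro ht
    have : t ∈ univ.filter (fun s => (p - s).val < r) := mem_filter.2 ⟨mem_univ _, ht⟩
    rw [← hp, mem_filter] at this
    exact this.2

lemma card_star (hr : 0 < r) (hrn : r ≤ n) (a : Fin n) :
    ((powersetCard r (univ : Finset (Fin n))).filter (fun S => a ∈ S)).card
      = (n-1).choose (r-1) := by
  classical
  have himg : (powersetCard r (univ : Finset (Fin n))).filter (fun S => a ∈ S)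
      = image (fun Q => insert a Q) (powersetCard (r-1) ((univ : Finset (Fin n)).erase a)) := by
    ext S
    simp only [mem_filter, mem_powersetCard, mem_image]
    constructor
    · rintro ⟨⟨-, hSc⟩, haS⟩
      refine ⟨S.erase a, ⟨fun x hx => mem_erase.2 ⟨(mem_erase.1 hx).1, mem_univ _⟩, ?_⟩,
        insert_erase haS⟩
      rw [card_erase_of_mem haS, hSc]
    · rintro ⟨Q, ⟨hQsub, hQc⟩, rfl⟩
      have haQ : a ∉ Q := fun h => (mem_erase.1 (hQsub h)).1 rfl
      refine ⟨⟨subset_univ _, ?_⟩, mem_insert_self _ _⟩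
      rw [card_insert_of_notMem haQ, hQc]
      omega
  rw [himg, card_image_of_injOn, card_powersetCard, card_erase_of_mem (mem_univ a), card_univ,
    Fintype.card_fin]
  intro Q hQ Q' hQ' he
  rw [mem_coe, mem_powersetCard] at hQ hQ'
  have haQ : a ∉ Q := fun h => (mem_erase.1 (hQ.1 h)).1 rfl
  have haQ' : a ∉ Q' := fun h => (mem_erase.1 (hQ'.1 h)).1 rfl
  have he' : insert a Q = insert a Q' := he
  rw [← erase_insert haQ, ← erase_insert haQ', he']

lemma star_or_exchange (hr : 0 < r) (hn : 2 * r < n) (F : Finset (Finset (Fin n)))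
    (hF : ∀ S ∈ F, S.card = r) (hint : ∀ S ∈ F, ∀ T ∈ F, ¬ Disjoint S T)
    (hcard : F.card = (n-1).choose (r-1))
    (S : Finset (Fin n)) (hS : S ∈ F) (a : Fin n) (ha : a ∈ S) (b : Fin n) (hb : b ∉ S) :
    insert b (S.erase a) ∈ F ∨ (∀ M : Finset (Fin n), M.card = r → (M ∈ F ↔ a ∈ M)) := by
  classical
  by_cases hT : insert b (S.erase a) ∈ F
  · exact Or.inl hT
  right
  have hScard : S.card = r := hF S hS
  -- sub-claim: every r-set containing a and avoiding b is in F
  have hsub : ∀ R : Finset (Fin n), R.card = r → a ∈ R → b ∉ R → R ∈ F := by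
    intro R hRc haR hbR
    set U : Finset (Fin n) := R \ S with hU
    set k : ℕ := U.card with hk
    have haU : a ∉ U := by rw [hU, mem_sdiff]; tauto
    have hbU : b ∉ U := by rw [hU, mem_sdiff]; tauto
    have hUR : U ⊆ R := by rw [hU]; exact sdiff_subset
    have hUS : ∀ x ∈ U, x ∉ S := by intro x hx; rw [hU, mem_sdiff] at hx; exact hx.2
    have hkr : k + 1 ≤ r := by
      rw [hk, hU]
      have : R \ S ⊆ R.erase a := by
        intro x hx
        rw [mem_erase, mem_sdiff] at *
        exact ⟨fun he => (he ▸ hx.2) ha, hx.1⟩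
      have := card_le_card this
      rw [card_erase_of_mem haR, hRc] at this
      omega
    have hbRS : b ∉ R ∪ S := by rw [mem_union]; tauto
    have hRRS : R ⊆ R ∪ S := subset_union_left
    have hcard2 : (insert a U).card = k + 1 := by rw [card_insert_of_notMem haU]
    have hcard4 : (R ∪ S).card = k + r := by
      have hcc := card_sdiff_add_card R S
      rw [← hU] at hcc
      omega
    have hcard5 : (insert b (R ∪ S)).card = k + r + 1 := by
      rw [card_insert_of_notMem hbRS, hcard4]
    set key : Fin n → ℕ := fun x =>
      if x ∈ U then 0 else if x = a then 1 else if x ∈ R then 2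
      else if x ∈ S then 3 else if x = b then 4 else 5 with hkeydef
    have hf1 : univ.filter (fun x => key x < 1) = U := by
      ext x
      simp only [mem_filter, mem_univ, true_and, hkeydef]
      by_cases h1 : x ∈ U
      · rw [if_pos h1]; simpa using h1
      · rw [if_neg h1]
        by_cases h2 : x = a
        · rw [if_pos h2]; simpa using h1
        · rw [if_neg h2]
          by_cases h3 : x ∈ R
          · rw [if_pos h3]; simpa using h1
          · rw [if_neg h3]
            by_cases h4 : x ∈ S
            · rw [if_pos h4]; simpa using h1
            · rw [if_neg h4]
              by_cases h5 : x = b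
              · rw [if_pos h5]; simpa using h1
              · rw [if_neg h5]; simpa using h1
    have hf2 : univ.filter (fun x => key x < 2) = insert a U := by
      ext x
      simp only [mem_filter, mem_univ, true_and, hkeydef, mem_insert]
      by_cases h1 : x ∈ U
      · rw [if_pos h1]; simp [h1]
      · rw [if_neg h1]
        by_cases h2 : x = a
        · rw [if_pos h2]; simp [h2]
        · rw [if_neg h2]
          by_cases h3 : x ∈ R
          · rw [if_pos h3]; simp [h1, h2]
          · rw [if_neg h3]
            by_cases h4 : x ∈ S
            · rw [if_pos h4]; simp [h1, h2]
            · rw [if_neg h4]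
              by_cases h5 : x = b
              · rw [if_pos h5]; simp [h1, h2]
              · rw [if_neg h5]; simp [h1, h2]
    have hf3 : univ.filter (fun x => key x < 3) = R := by
      ext x
      simp only [mem_filter, mem_univ, true_and, hkeydef]
      by_cases h1 : x ∈ U
      · rw [if_pos h1]; simpa using hUR h1
      · rw [if_neg h1]
        by_cases h2 : x = a
        · rw [if_pos h2]; subst h2; simpa using haR
        · rw [if_neg h2]
          by_cases h3 : x ∈ R
          · rw [if_pos h3]; simpa using h3
          · rw [if_neg h3]
            by_cases h4 : x ∈ S
            · rw [if_pos h4]; simpa using h3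
            · rw [if_neg h4]
              by_cases h5 : x = b
              · rw [if_pos h5]; simpa using h3
              · rw [if_neg h5]; simpa using h3
    have hf4 : univ.filter (fun x => key x < 4) = R ∪ S := by
      ext x
      simp only [mem_filter, mem_univ, true_and, hkeydef, mem_union]
      by_cases h1 : x ∈ U
      · rw [if_pos h1]; simp [hUR h1]
      · rw [if_neg h1]
        by_cases h2 : x = a
        · rw [if_pos h2]; subst h2; simp [haR]
        · rw [if_neg h2]
          by_cases h3 : x ∈ R
          · rw [if_pos h3]; simp [h3]
          · rw [if_neg h3]
            by_cases h4 : x ∈ S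
            · rw [if_pos h4]; simp [h4]
            · rw [if_neg h4]
              by_cases h5 : x = b
              · rw [if_pos h5]; simp [h3, h4]
              · rw [if_neg h5]; simp [h3, h4]
    have hf5 : univ.filter (fun x => key x < 5) = insert b (R ∪ S) := by
      ext x
      simp only [mem_filter, mem_univ, true_and, hkeydef, mem_insert, mem_union]
      by_cases h1 : x ∈ U
      · rw [if_pos h1]; simp [hUR h1]
      · rw [if_neg h1]
        by_cases h2 : x = a
        · rw [if_pos h2]; subst h2; simp [haR]
        · rw [if_neg h2]
          by_cases h3 : x ∈ R
          · rw [if_pos h3]; simp [h3]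
          · rw [if_neg h3]
            by_cases h4 : x ∈ S
            · rw [if_pos h4]; simp [h4]
            · rw [if_neg h4]
              by_cases h5 : x = b
              · rw [if_pos h5]; simp [h5]
              · rw [if_neg h5]; simp [h3, h4, h5]
    obtain ⟨τ, hτ⟩ := exists_sorted_equiv key
    have hA1 : image τ (arcIdx 0 k) = U := by
      have := hτ 1 U hf1; rwa [← hk] at this
    have hA2 : image τ (arcIdx 0 (k+1)) = insert a U := by
      have := hτ 2 (insert a U) hf2; rwa [hcard2] at this
    have hA3 : image τ (arcIdx 0 r) = R := by
      have := hτ 3 R hf3; rwa [hRc] at this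
    have hA4 : image τ (arcIdx 0 (k+r)) = R ∪ S := by
      have := hτ 4 (R ∪ S) hf4; rwa [hcard4] at this
    have hA5 : image τ (arcIdx 0 (k+r+1)) = insert b (R ∪ S) := by
      have := hτ 5 (insert b (R ∪ S)) hf5; rwa [hcard5] at this
    -- the three relevant arcs
    have harcR : arcF τ 0 r = R := hA3
    have harcS : arcF τ ((k : ℕ) : ZMod n) r = S := by
      rw [arcF, arcIdx_cast_eq_sdiff hr (by omega), image_sdiff _ _ τ.injective, hA1]
      have : k + r = (R ∪ S).card := hcard4.symm
      rw [hA4]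
      ext x
      rw [mem_sdiff, mem_union]
      constructor
      · rintro ⟨hx1 | hx1, hx2⟩
        · by_contra hxS
          exact hx2 (by rw [hU, mem_sdiff]; exact ⟨hx1, hxS⟩)
        · exact hx1
      · intro hxS
        exact ⟨Or.inr hxS, fun hxU => hUS x hxU hxS⟩
    have harcT : arcF τ (((k+1 : ℕ)) : ZMod n) r = insert b (S.erase a) := by
      have he : k + 1 + r = k + r + 1 := by omega
      rw [arcF, arcIdx_cast_eq_sdiff hr (by omega), image_sdiff _ _ τ.injective, he, hA5, hA2]
      ext x
      rw [mem_sdiff, mem_insert, mem_insert, mem_union, mem_insert, mem_erase]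
      constructor
      · rintro ⟨hx1 | (hx1 | hx1), hx2⟩
        · exact Or.inl hx1
        · right
          push_neg at hx2
          refine ⟨hx2.1, ?_⟩
          by_contra hxS
          exact hx2.2 (by rw [hU, mem_sdiff]; exact ⟨hx1, hxS⟩)
        · right
          push_neg at hx2
          exact ⟨hx2.1, hx1⟩
      · rintro (rfl | ⟨hxa, hxS⟩)
        · refine ⟨Or.inl rfl, ?_⟩
          push_neg
          refine ⟨fun he => hb (he ▸ ha), hbU⟩
        · refine ⟨Or.inr (Or.inr hxS), ?_⟩
          push_neg
          exact ⟨hxa, fun hxU => hUS x hxU hxS⟩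
    obtain ⟨p, hp⟩ := ekr_all_arcs hr hn F hF hint hcard τ
    have hSin : (p - ((k : ℕ) : ZMod n)).val < r := (hp _).1 (by rw [harcS]; exact hS)
    set d : ℕ := (p - ((k : ℕ) : ZMod n)).val with hd
    rcases Nat.eq_zero_or_pos d with hd0 | hdpos
    · -- p = k, arc starting at 0 contains position k, R ∈ F
      have hpk : p = ((k : ℕ) : ZMod n) := by
        have h0 : ((d : ℕ) : ZMod n) = 0 := by rw [hd0]; simp
        rw [hd, val_cast_val] at h0
        exact sub_eq_zero.1 h0
      have : arcF τ 0 r ∈ F := by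
        rw [hp 0]
        rw [hpk, sub_zero, ZMod.val_cast_of_lt (by omega)]
        omega
      rwa [harcR] at this
    · -- T ∈ F, contradiction
      exfalso
      apply hT
      have hdlt : d - 1 < r := by omega
      have hpk1 : (p - (((k+1 : ℕ)) : ZMod n)).val = d - 1 := by
        have h1 : p - (((k+1 : ℕ)) : ZMod n) = ((d : ℕ) : ZMod n) - ((1 : ℕ) : ZMod n) := by
          rw [hd, val_cast_val]
          push_cast
          ring
        rw [h1, natCast_sub_natCast (by omega) (by have := ZMod.val_lt (p - ((k : ℕ) : ZMod n)); omega)]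
      have : arcF τ (((k+1 : ℕ)) : ZMod n) r ∈ F := by
        rw [hp _, hpk1]; omega
      rwa [harcT] at this
  -- every member of F contains a
  have hstar_sub : ∀ M ∈ F, a ∈ M := by
    intro M hM
    by_contra haM
    have hMc : M.card = r := hF M hM
    have havail : r - 1 ≤ ((univ : Finset (Fin n)) \ (insert a (insert b M))).card := by
      have h1 : (insert a (insert b M)).card ≤ r + 2 := by
        calc (insert a (insert b M)).card ≤ (insert b M).card + 1 := card_insert_le _ _
          _ ≤ M.card + 1 + 1 := by have := card_insert_le b M; omega
          _ = r + 2 := by omega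
      have h2 := card_sdiff_add_card (univ : Finset (Fin n)) (insert a (insert b M))
      have h3 : ((univ : Finset (Fin n)) ∪ insert a (insert b M)) = univ := by
        apply union_eq_left.2; exact subset_univ _
      rw [h3, card_univ, Fintype.card_fin] at h2
      omega
    obtain ⟨Q, hQsub, hQcard⟩ := exists_subset_card_eq havail
    have hQ : ∀ x ∈ Q, x ≠ a ∧ x ≠ b ∧ x ∉ M := by
      intro x hx
      have := hQsub hx
      rw [mem_sdiff, mem_insert, mem_insert] at this
      push_neg at this
      exact this.2
    have haQ : a ∉ Q := fun h => (hQ a h).1 rfl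
    set R : Finset (Fin n) := insert a Q with hR
    have hRc : R.card = r := by rw [hR, card_insert_of_notMem haQ, hQcard]; omega
    have hRF : R ∈ F := by
      apply hsub R hRc (mem_insert_self _ _)
      rw [hR, mem_insert]
      push_neg
      exact ⟨fun he => hb (he ▸ ha), fun h => (hQ b h).2.1 rfl⟩
    apply hint R hRF M hM
    rw [disjoint_left]
    intro x hxR hxM
    rw [hR, mem_insert] at hxR
    rcases hxR with rfl | hxQ
    · exact haM hxM
    · exact (hQ x hxQ).2.2 hxM
  -- conclude F equals the star at a
  have hFsub : F ⊆ (powersetCard r (univ : Finset (Fin n))).filter (fun S => a ∈ S) := by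
    intro M hM
    rw [mem_filter, mem_powersetCard_univ]
    exact ⟨hF M hM, hstar_sub M hM⟩
  have hFeq : F = (powersetCard r (univ : Finset (Fin n))).filter (fun S => a ∈ S) :=
    eq_of_subset_of_card_le hFsub (by rw [card_star hr (by omega) a, hcard])
  intro M hMc
  rw [hFeq, mem_filter, mem_powersetCard_univ]
  constructor
  · tauto
  · intro h; exact ⟨hMc, h⟩

lemma exchange_all (F : Finset (Finset (Fin n))) (hF : ∀ S ∈ F, S.card = r)
    (hex : ∀ S ∈ F, ∀ a ∈ S, ∀ b, b ∉ S → insert b (S.erase a) ∈ F)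
    (S0 : Finset (Fin n)) (hS0 : S0 ∈ F) :
    ∀ R : Finset (Fin n), R.card = r → R ∈ F := by
  classical
  suffices h : ∀ m (S : Finset (Fin n)), S ∈ F → ∀ R : Finset (Fin n),
      R.card = r → (R \ S).card = m → R ∈ F by
    intro R hR
    exact h (R \ S0).card S0 hS0 R hR rfl
  intro m
  induction m with
  | zero =>
    intro S hS R hRc hm
    have h0 : R \ S = ∅ := card_eq_zero.1 hm
    have hRS : R ⊆ S := sdiff_eq_empty_iff_subset.1 h0
    have : R = S := eq_of_subset_of_card_le hRS (by rw [hRc, hF S hS])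
    rwa [this]
  | succ m ih =>
    intro S hS R hRc hm
    have hSc : S.card = r := hF S hS
    have hST : (S \ R).card = (R \ S).card := by
      have h1 := card_sdiff_add_card_inter S R
      have h2 := card_sdiff_add_card_inter R S
      rw [inter_comm] at h2
      omega
    obtain ⟨b, hbR⟩ : (R \ S).Nonempty := card_pos.1 (by omega)
    obtain ⟨c, hcS⟩ : (S \ R).Nonempty := card_pos.1 (by omega)
    rw [mem_sdiff] at hbR hcS
    have hS' : insert b (S.erase c) ∈ F := hex S hS c hcS.1 b hbR.2
    have hRS' : (R \ insert b (S.erase c)).card = m := by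
      have : R \ insert b (S.erase c) = (R \ S).erase b := by
        ext x
        simp only [mem_sdiff, mem_insert, mem_erase]
        constructor
        · rintro ⟨hxR, hx⟩
          push_neg at hx
          refine ⟨hx.1, hxR, fun hxS => ?_⟩
          have hxc : x ≠ c := fun he => hcS.2 (he ▸ hxR)
          exact hx.2 hxc hxS
        · rintro ⟨hxb, hxR, hxS⟩
          refine ⟨hxR, ?_⟩
          push_neg
          exact ⟨hxb, fun _ h => hxS h⟩
      rw [this, card_erase_of_mem (mem_sdiff.2 hbR), hm]
      omega
    exact ih _ hS' R hRc hRS'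

theorem ekr_star (hr : 0 < r) (hn : 2 * r < n) (F : Finset (Finset (Fin n)))
    (hF : ∀ S ∈ F, S.card = r) (hint : ∀ S ∈ F, ∀ T ∈ F, ¬ Disjoint S T)
    (hcard : F.card = (n-1).choose (r-1)) :
    ∃ a : Fin n, ∀ S : Finset (Fin n), S.card = r → (S ∈ F ↔ a ∈ S) := by
  classical
  by_cases hex : ∀ S ∈ F, ∀ a ∈ S, ∀ b, b ∉ S → insert b (S.erase a) ∈ F
  · exfalso
    have hFne : F.Nonempty := card_pos.1 (by rw [hcard]; exact Nat.choose_pos (by omega))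
    obtain ⟨S0, hS0⟩ := hFne
    have hall := exchange_all F hF hex S0 hS0
    obtain ⟨A, hAsub, hAcard⟩ := exists_subset_card_eq
      (show r ≤ (univ : Finset (Fin n)).card by rw [card_univ, Fintype.card_fin]; omega)
    obtain ⟨B, hBsub, hBcard⟩ := exists_subset_card_eq
      (show r ≤ ((univ : Finset (Fin n)) \ A).card by
        have := card_sdiff_add_card (univ : Finset (Fin n)) A
        rw [union_eq_left.2 (subset_univ A), card_univ, Fintype.card_fin] at this
        omega)
    have hdisj : Disjoint A B := by
      rw [disjoint_left]
      intro x hxA hxB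
      have := hBsub hxB
      rw [mem_sdiff] at this
      exact this.2 hxA
    exact hint A (hall A hAcard) B (hall B hBcard) hdisj.symm.symm
  · push_neg at hex
    obtain ⟨S, hS, a, ha, b, hb, hT⟩ := hex
    rcases star_or_exchange hr hn F hF hint hcard S hS a ha b hb with h | h
    · exact absurd h hT
    · exact ⟨a, h⟩

end

/-- The Kneser graph `K_{n:r}`: vertices are the `r`-subsets of `[n]`, adjacent iff
disjoint. -/
def kneser (n r : ℕ) : SimpleGraph {S : Finset (Fin n) // S.card = r} where
  Adj S T := S ≠ T ∧ Disjoint (S : Finset (Fin n)) (T : Finset (Fin n))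
  symm := ⟨fun S T h => ⟨h.1.symm, h.2.symm⟩⟩
  loopless := ⟨fun S h => h.1 rfl⟩

/-- (Stahl) For `n > 2r` and `n/r = n'/r'`, there is a homomorphism
`K_{n:r} → K_{n':r'}` iff `n` divides `n'`. -/
theorem stmt16 (n r n' r' : ℕ) (hr : 0 < r) (h1 : 2 * r < n)
    (h2 : (n : ℚ) / (r : ℚ) = (n' : ℚ) / (r' : ℚ)) :
    Nonempty (kneser n r →g kneser n' r') ↔ n ∣ n' := by
  classical
  have hn0 : 0 < n := by omega
  have hrq : (r : ℚ) ≠ 0 := Nat.cast_ne_zero.2 (by omega)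
  have hnq : (n : ℚ) ≠ 0 := Nat.cast_ne_zero.2 (by omega)
  have hr' : 0 < r' := by
    by_contra h
    have h0 : r' = 0 := by omega
    rw [h0] at h2
    simp only [Nat.cast_zero, div_zero] at h2
    rw [div_eq_zero_iff] at h2
    rcases h2 with h | h
    · exact hnq h
    · exact hrq h
  have hr'q : (r' : ℚ) ≠ 0 := Nat.cast_ne_zero.2 (by omega)
  have hcross : n * r' = n' * r := by
    rw [div_eq_div_iff hrq hr'q] at h2
    exact_mod_cast h2
  constructor
  · rintro ⟨f⟩
    haveI : NeZero n := ⟨by omega⟩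
    set Fi : Fin n' → Finset (Finset (Fin n)) := fun i =>
      (univ.filter (fun v : {S : Finset (Fin n) // S.card = r} => i ∈ (f v).val)).image
        (fun v => v.val) with hFi
    have hFival : ∀ (i : Fin n') (S : Finset (Fin n)),
        S ∈ Fi i ↔ ∃ hc : S.card = r, i ∈ (f ⟨S, hc⟩).val := by
      intro i S
      rw [hFi]
      simp only [mem_image, mem_filter, mem_univ, true_and]
      constructor
      · rintro ⟨v, hv, rfl⟩
        exact ⟨v.2, by rwa [Subtype.coe_eta]⟩
      · rintro ⟨hc, hi⟩
        exact ⟨⟨S, hc⟩, hi, rfl⟩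
    have hFcard : ∀ i, ∀ S ∈ Fi i, S.card = r := by
      intro i S hS
      obtain ⟨hc, -⟩ := (hFival i S).1 hS
      exact hc
    have hFint : ∀ i, ∀ S ∈ Fi i, ∀ T ∈ Fi i, ¬ Disjoint S T := by
      intro i S hS T hT hdisj
      obtain ⟨hcS, hiS⟩ := (hFival i S).1 hS
      obtain ⟨hcT, hiT⟩ := (hFival i T).1 hT
      by_cases hST : S = T
      · subst hST
        have : S = ∅ := disjoint_self.1 hdisj
        rw [this] at hcS
        simp at hcS
        omega
      · have hadj : (kneser n r).Adj ⟨S, hcS⟩ ⟨T, hcT⟩ :=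
          show _ ∧ _ from ⟨fun he => hST (congrArg Subtype.val he), hdisj⟩
        have hmapped := f.map_rel hadj
        exact Finset.not_disjoint_iff.2 ⟨i, hiS, hiT⟩ (show _ ∧ _ from hmapped).2
    have hFicard_eq : ∀ i, (Fi i).card
        = (univ.filter (fun v : {S : Finset (Fin n) // S.card = r} => i ∈ (f v).val)).card := by
      intro i
      rw [hFi]
      exact card_image_of_injective _ Subtype.val_injective
    have hvert : Fintype.card {S : Finset (Fin n) // S.card = r} = n.choose r := by
      rw [Fintype.card_subtype]
      have hpc : univ.filter (fun S : Finset (Fin n) => S.card = r)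
          = powersetCard r (univ : Finset (Fin n)) := by
        ext S
        rw [mem_filter, mem_powersetCard_univ]
        simp
      rw [hpc, card_powersetCard, card_univ, Fintype.card_fin]
    have hsum : ∑ i : Fin n', (Fi i).card = r' * n.choose r := by
      calc ∑ i : Fin n', (Fi i).card
          = ∑ i : Fin n',
              (univ.filter (fun v : {S : Finset (Fin n) // S.card = r} => i ∈ (f v).val)).card :=
            Finset.sum_congr rfl (fun i _ => hFicard_eq i)
        _ = ∑ v : {S : Finset (Fin n) // S.card = r},
              (univ.filter (fun i : Fin n' => i ∈ (f v).val)).card := by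
            simp only [card_filter]
            exact Finset.sum_comm
        _ = ∑ _v : {S : Finset (Fin n) // S.card = r}, r' := by
            apply Finset.sum_congr rfl
            intro v _
            rw [filter_univ_mem]
            exact (f v).2
        _ = r' * n.choose r := by
            rw [Finset.sum_const, smul_eq_mul, card_univ, hvert, mul_comm]
    have hid : n' * (n-1).choose (r-1) = r' * n.choose r := by
      apply Nat.eq_of_mul_eq_mul_left hn0
      have hsucc : n * (n-1).choose (r-1) = n.choose r * r := by
        obtain ⟨r0, rfl⟩ : ∃ r0, r = r0 + 1 := ⟨r - 1, by omega⟩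
        obtain ⟨n0, rfl⟩ : ∃ n0, n = n0 + 1 := ⟨n - 1, by omega⟩
        simp only [Nat.add_sub_cancel]
        exact Nat.add_one_mul_choose_eq n0 r0
      calc n * (n' * (n-1).choose (r-1)) = n' * (n * (n-1).choose (r-1)) := by ring
        _ = n' * (n.choose r * r) := by rw [hsucc]
        _ = (n' * r) * n.choose r := by ring
        _ = (n * r') * n.choose r := by rw [← hcross]
        _ = n * (r' * n.choose r) := by ring
    have hbound : ∀ i, (Fi i).card ≤ (n-1).choose (r-1) :=
      fun i => ekr_bound hr h1 (Fi i) (hFcard i) (hFint i)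
    have hall : ∀ i : Fin n', (Fi i).card = (n-1).choose (r-1) := by
      by_contra hcon
      push_neg at hcon
      obtain ⟨i0, hi0⟩ := hcon
      have hlt : (Fi i0).card < (n-1).choose (r-1) := lt_of_le_of_ne (hbound i0) hi0
      have hslt := Finset.sum_lt_sum (s := (univ : Finset (Fin n')))
        (f := fun i => (Fi i).card) (g := fun _ => (n-1).choose (r-1))
        (fun i _ => hbound i) ⟨i0, mem_univ _, hlt⟩
      rw [hsum, Finset.sum_const, smul_eq_mul, card_univ, Fintype.card_fin] at hslt
      omega
    have hstar := fun i => ekr_star hr h1 (Fi i) (hFcard i) (hFint i) (hall i)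
    choose g hg using hstar
    have hmem : ∀ (v : {S : Finset (Fin n) // S.card = r}) (i : Fin n'),
        i ∈ (f v).val ↔ g i ∈ v.val := by
      intro v i
      rw [← hg i v.val v.2, hFival]
      constructor
      · intro hi
        exact ⟨v.2, by rwa [Subtype.coe_eta]⟩
      · rintro ⟨hc, hi⟩
        rwa [Subtype.coe_eta] at hi
    set fib : Fin n → ℕ := fun j => (univ.filter (fun i : Fin n' => g i = j)).card with hfib
    have hfibsum : ∀ v : {S : Finset (Fin n) // S.card = r}, ∑ j ∈ v.val, fib j = r' := by
      intro v
      have hcardf : (univ.filter (fun i : Fin n' => g i ∈ v.val)).card = r' := by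
        have he : univ.filter (fun i : Fin n' => g i ∈ v.val) = (f v).val := by
          ext i
          rw [mem_filter]
          constructor
          · intro h
            exact (hmem v i).2 h.2
          · intro h
            exact ⟨mem_univ _, (hmem v i).1 h⟩
        rw [he]
        exact (f v).2
      have hfw := card_eq_sum_card_fiberwise (f := g)
        (s := univ.filter (fun i : Fin n' => g i ∈ v.val)) (t := v.val)
        (fun i hi => (mem_filter.1 hi).2)
      rw [hcardf] at hfw
      rw [hfw]
      apply Finset.sum_congr rfl
      intro j hj
      have hee : (univ.filter (fun i : Fin n' => g i ∈ v.val)).filter (fun i => g i = j)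
          = univ.filter (fun i : Fin n' => g i = j) := by
        ext i
        simp only [mem_filter, mem_univ, true_and]
        constructor
        · tauto
        · intro h
          exact ⟨h ▸ hj, h⟩
      show (univ.filter (fun i : Fin n' => g i = j)).card = _
      rw [hee]
    have hfibconst : ∀ j j' : Fin n, fib j = fib j' := by
      intro j j'
      by_cases hjj : j = j'
      · rw [hjj]
      have hcs : r - 1 ≤ ((univ : Finset (Fin n)) \ {j, j'}).card := by
        have h2' : ({j, j'} : Finset (Fin n)).card ≤ 2 := card_insert_le _ _ |>.trans (by simp)
        have h3' := card_sdiff_of_subset (subset_univ ({j, j'} : Finset (Fin n)))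
        rw [card_univ, Fintype.card_fin] at h3'
        omega
      obtain ⟨P, hPsub, hPcard⟩ := exists_subset_card_eq hcs
      have hjP : j ∉ P := by
        intro h
        have := hPsub h
        rw [mem_sdiff] at this
        exact this.2 (by simp)
      have hj'P : j' ∉ P := by
        intro h
        have := hPsub h
        rw [mem_sdiff] at this
        exact this.2 (by simp)
      have hSc : (insert j P).card = r := by
        rw [card_insert_of_notMem hjP, hPcard]; omega
      have hS'c : (insert j' P).card = r := by
        rw [card_insert_of_notMem hj'P, hPcard]; omega
      have e1 := hfibsum ⟨insert j P, hSc⟩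
      have e2 := hfibsum ⟨insert j' P, hS'c⟩
      rw [Finset.sum_insert hjP] at e1
      rw [Finset.sum_insert hj'P] at e2
      omega
    have htotal : n' = ∑ j : Fin n, fib j := by
      have := card_eq_sum_card_fiberwise (f := g) (s := (univ : Finset (Fin n')))
        (t := (univ : Finset (Fin n))) (fun i _ => mem_univ _)
      rw [card_univ, Fintype.card_fin] at this
      exact this
    refine ⟨fib ⟨0, hn0⟩, ?_⟩
    rw [htotal, Finset.sum_congr rfl (fun j _ => hfibconst j ⟨0, hn0⟩), Finset.sum_const,
      smul_eq_mul, card_univ, Fintype.card_fin]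
  · rintro ⟨m, hm⟩
    have hr'm : r' = r * m := by
      have hx : n * r' = n * (r * m) := by rw [hcross, hm]; ring
      exact Nat.eq_of_mul_eq_mul_left hn0 hx
    have hm0 : 0 < m := by
      by_contra h
      have hz : m = 0 := by omega
      rw [hz, Nat.mul_zero] at hr'm
      omega
    have hmn : n' = m * n := by rw [hm]; ring
    have hinj : Function.Injective
        (fun p : Fin m × Fin n => Fin.cast hmn.symm (finProdFinEquiv p)) :=
      fun p q h => finProdFinEquiv.injective (Fin.cast_injective _ h)
    have hcardimg : ∀ v : {S : Finset (Fin n) // S.card = r},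
        (((univ : Finset (Fin m)) ×ˢ v.val).image
          (fun p : Fin m × Fin n => Fin.cast hmn.symm (finProdFinEquiv p))).card = r' := by
      intro v
      rw [card_image_of_injective _ hinj, card_product, card_univ, Fintype.card_fin, v.2,
        hr'm, mul_comm]
    refine ⟨⟨fun v => ⟨_, hcardimg v⟩, ?_⟩⟩
    intro v w hvw0
    obtain ⟨hne, hdisj⟩ : _ ∧ _ := hvw0
    show _ ∧ _
    constructor
    · intro he
      apply hne
      have hvw : ((univ : Finset (Fin m)) ×ˢ v.val).image
            (fun p : Fin m × Fin n => Fin.cast hmn.symm (finProdFinEquiv p))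
          = ((univ : Finset (Fin m)) ×ˢ w.val).image
            (fun p : Fin m × Fin n => Fin.cast hmn.symm (finProdFinEquiv p)) :=
        congrArg Subtype.val he
      apply Subtype.ext
      ext x
      constructor
      · intro hx
        have hmem1 : (⟨⟨0, hm0⟩, x⟩ : Fin m × Fin n) ∈ (univ : Finset (Fin m)) ×ˢ v.val :=
          mem_product.2 ⟨mem_univ _, hx⟩
        have := mem_image_of_mem
          (fun p : Fin m × Fin n => Fin.cast hmn.symm (finProdFinEquiv p)) hmem1
        rw [hvw] at this
        obtain ⟨q, hq, heq⟩ := mem_image.1 this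
        have hqe : q = ⟨⟨0, hm0⟩, x⟩ := hinj heq
        subst hqe
        exact (mem_product.1 hq).2
      · intro hx
        have hmem1 : (⟨⟨0, hm0⟩, x⟩ : Fin m × Fin n) ∈ (univ : Finset (Fin m)) ×ˢ w.val :=
          mem_product.2 ⟨mem_univ _, hx⟩
        have := mem_image_of_mem
          (fun p : Fin m × Fin n => Fin.cast hmn.symm (finProdFinEquiv p)) hmem1
        rw [← hvw] at this
        obtain ⟨q, hq, heq⟩ := mem_image.1 this
        have hqe : q = ⟨⟨0, hm0⟩, x⟩ := hinj heq
        subst hqe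
        exact (mem_product.1 hq).2
    · rw [disjoint_left]
      rintro x hx1 hx2
      obtain ⟨p, hp, rfl⟩ := mem_image.1 hx1
      obtain ⟨q, hq, heq⟩ := mem_image.1 hx2
      have hqe : q = p := hinj heq
      subst hqe
      exact disjoint_left.1 hdisj (mem_product.1 hp).2 (mem_product.1 hq).2
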